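/- For every γ > 0 there exists a constant C = C(n, γ) > 0 such that for all u > 0 and all x ∈ ℝⁿ, |∂_u^γ p_u(x)| ≤ C · (u + |x|)^{−n−γ}. -/

import Mathlib

open MeasureTheory Set
open scoped ENNReal
open Polynomial Filter

/-- The Poisson kernel of the upper half-space `ℝ^{n+1}_+`:
`p_t(x) = Γ((n+1)/2) π^{−(n+1)/2} t (t² + |x|²)^{−(n+1)/2}`. -/
noncomputable def poissonKernelHS (n : ℕ) (t : ℝ) (x : EuclideanSpace ℝ (Fin n)) : ℝ :=
  Real.Gamma (((n : ℝ) + 1) / 2) / Real.pi ^ (((n : ℝ) + 1) / 2) *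
    (t * (t ^ 2 + ‖x‖ ^ 2) ^ (-(((n : ℝ) + 1) / 2)))

/-- The smallest integer strictly greater than `α` (for `α ≥ 0`). -/
noncomputable def mOf (α : ℝ) : ℕ := ⌊α⌋₊ + 1

/-- The fractional derivative in `t` of the Poisson kernel, of order `α > 0`, with `m` the
smallest integer strictly exceeding `α`:
`∂_t^α p_t(x) = (e^{−iπ(m−α)}/Γ(m−α)) ∫₀^∞ ∂_t^m p_{t+s}(x) s^{m−α−1} ds`. -/
noncomputable def fracKernel (n : ℕ) (α : ℝ) (t : ℝ) (x : EuclideanSpace ℝ (Fin n)) : ℂ :=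
  Complex.exp ((↑(-(Real.pi * ((mOf α : ℝ) - α))) : ℂ) * Complex.I) /
      (Real.Gamma ((mOf α : ℝ) - α) : ℂ) *
    ((∫ s in Ioi (0 : ℝ),
        iteratedDeriv (mOf α) (fun r => poissonKernelHS n r x) (t + s) *
          s ^ ((mOf α : ℝ) - α - 1) : ℝ) : ℂ)

/-- `∂_t^α P_t f(x) = ∫_{ℝⁿ} ∂_t^α p_t(x−y) f(y) dy` for a `B`-valued `f`. -/
noncomputable def fracPoisson (n : ℕ) {B : Type*} [NormedAddCommGroup B] [NormedSpace ℂ B]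
    (α t : ℝ) (f : EuclideanSpace ℝ (Fin n) → B) (x : EuclideanSpace ℝ (Fin n)) : B :=
  ∫ y, fracKernel n α t (x - y) • f y

/-- The fractional Littlewood–Paley `g`-function
`g_α^q(f)(x) = (∫₀^∞ ‖t^α ∂_t^α P_t f(x)‖_B^q dt/t)^{1/q}`, with values in `[0,∞]`. -/
noncomputable def gFun (n : ℕ) {B : Type*} [NormedAddCommGroup B] [NormedSpace ℂ B]
    (q α : ℝ) (f : EuclideanSpace ℝ (Fin n) → B) (x : EuclideanSpace ℝ (Fin n)) : ℝ≥0∞ :=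
  (∫⁻ t in Ioi (0 : ℝ),
      ENNReal.ofReal (‖t ^ α • fracPoisson n α t f x‖ ^ q / t)) ^ (1 / q)

/-- The fractional area function
`S_α^q(f)(x) = (∬_{|x−y|<t} ‖t^α ∂_t^α P_t f(y)‖_B^q dy dt/t^{n+1})^{1/q}`,
with values in `[0,∞]`. -/
noncomputable def areaFun (n : ℕ) {B : Type*} [NormedAddCommGroup B] [NormedSpace ℂ B]
    (q α : ℝ) (f : EuclideanSpace ℝ (Fin n) → B) (x : EuclideanSpace ℝ (Fin n)) : ℝ≥0∞ :=
  (∫⁻ t in Ioi (0 : ℝ), ∫⁻ y in {y | ‖x - y‖ < t},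
      ENNReal.ofReal (‖t ^ α • fracPoisson n α t f y‖ ^ q / t ^ (n + 1))) ^ (1 / q)

/-- The fractional `g*_λ`-function
`g_{λ,α}^{q,*}(f)(x) = (∬_{ℝⁿ×(0,∞)} (t/(t+|x−y|))^{λn} ‖t^α ∂_t^α P_t f(y)‖_B^q
dy dt/t^{n+1})^{1/q}`, with values in `[0,∞]`. -/
noncomputable def gStarFun (n : ℕ) {B : Type*} [NormedAddCommGroup B] [NormedSpace ℂ B]
    (q α lam : ℝ) (f : EuclideanSpace ℝ (Fin n) → B) (x : EuclideanSpace ℝ (Fin n)) : ℝ≥0∞ :=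
  (∫⁻ t in Ioi (0 : ℝ), ∫⁻ y,
      ENNReal.ofReal ((t / (t + ‖x - y‖)) ^ (lam * n) *
        ‖t ^ α • fracPoisson n α t f y‖ ^ q / t ^ (n + 1))) ^ (1 / q)

noncomputable def Qp (a : ℝ) : ℕ → Polynomial ℝ
  | 0 => X
  | (m+1) => (X^2 + 1) * derivative (Qp a m) - C (2*a + 2*m) * X * Qp a m

lemma Qp_natDegree_le (a : ℝ) (m : ℕ) : (Qp a m).natDegree ≤ m + 1 := by
  induction m with
  | zero => simp [Qp]
  | succ m ih =>
    rw [Qp]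
    refine le_trans (natDegree_sub_le _ _) (max_le ?_ ?_)
    · refine le_trans (natDegree_mul_le) ?_
      have h1 : (X^2+1 : Polynomial ℝ).natDegree ≤ 2 :=
        le_trans (natDegree_add_le _ _) (by simp)
      have h2 : (derivative (Qp a m)).natDegree ≤ m :=
        le_trans (natDegree_derivative_le _) (by omega)
      omega
    · refine le_trans (natDegree_mul_le) ?_
      have h1 : (C (2*a+2*(m:ℝ)) * X).natDegree ≤ 1 :=
        le_trans (natDegree_mul_le) (by rw [natDegree_C, natDegree_X])
      omega

lemma poly_eval_bound (p : Polynomial ℝ) (d : ℕ) (hd : p.natDegree ≤ d) (s : ℝ) (hs : 0 ≤ s) :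
    |p.eval s| ≤ (∑ i ∈ Finset.range (d+1), |p.coeff i|) * (1+s)^d := by
  rw [Polynomial.eval_eq_sum_range' (lt_of_le_of_lt hd (Nat.lt_succ_self d))]
  rw [Finset.sum_mul]
  refine le_trans (Finset.abs_sum_le_sum_abs _ _) (Finset.sum_le_sum ?_)
  intro i hi
  rw [abs_mul, abs_pow, abs_of_nonneg hs]
  refine mul_le_mul_of_nonneg_left ?_ (abs_nonneg _)
  calc s^i ≤ (1+s)^i := pow_le_pow_left₀ hs (by linarith) i
    _ ≤ (1+s)^d := pow_le_pow_right₀ (by linarith) (by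
        simpa using Nat.lt_succ_iff.mp (Finset.mem_range.mp hi))

noncomputable def Gq (a : ℝ) (m : ℕ) (s : ℝ) : ℝ := (1+s^2)^(-a-(m:ℝ)) * (Qp a m).eval s

lemma hasDerivAt_Gq (a : ℝ) (m : ℕ) (t : ℝ) : HasDerivAt (Gq a m) (Gq a (m+1) t) t := by
  have h1 : (0:ℝ) < 1 + t^2 := by positivity
  have hbase : HasDerivAt (fun s : ℝ => 1 + s^2) (2*t) t := by
    simpa using ((hasDerivAt_pow 2 t).const_add 1)
  have h2 : HasDerivAt (fun s : ℝ => (1+s^2)^(-a-(m:ℝ)))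
      (2*t * (-a-(m:ℝ)) * (1+t^2)^(-a-(m:ℝ)-1)) t :=
    hbase.rpow_const (Or.inl h1.ne')
  have h3 : HasDerivAt (fun s : ℝ => (Qp a m).eval s) ((Qp a m).derivative.eval t) t :=
    (Qp a m).hasDerivAt t
  have h4 : HasDerivAt (Gq a m) (2*t * (-a-(m:ℝ)) * (1+t^2)^(-a-(m:ℝ)-1) * (Qp a m).eval t
      + (1+t^2)^(-a-(m:ℝ)) * (Qp a m).derivative.eval t) t := h2.mul h3
  convert h4 using 1
  have e1 : (1+t^2)^(-a-((m:ℕ)+1:ℕ):ℝ) = (1+t^2)^(-a-(m:ℝ)-1) := by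
    push_cast; ring_nf
  have e2 : (1+t^2)^(-a-(m:ℝ)) = (1+t^2)^(-a-(m:ℝ)-1) * (1+t^2) := by
    rw [← Real.rpow_add_one h1.ne']; ring_nf
  rw [Gq, Qp]
  push_cast
  simp only [Polynomial.eval_sub, Polynomial.eval_mul, Polynomial.eval_add, Polynomial.eval_pow,
    Polynomial.eval_X, Polynomial.eval_C, Polynomial.eval_one]
  rw [show (-a-((m:ℝ)+1)) = -a-(m:ℝ)-1 by ring, e2]
  ring

-- base-case algebra
lemma base_alg (c a r t : ℝ) (hr : 0 < r) :
    c * (t * (t^2 + r^2)^(-a)) = c * r^(1-2*a) * Gq a 0 (t/r) := by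
  have hx : (0:ℝ) < 1 + (t/r)^2 := by positivity
  have e1 : t^2 + r^2 = r^2 * (1 + (t/r)^2) := by field_simp; ring
  have e2 : ((r^2 : ℝ) * (1+(t/r)^2))^(-a) = (r^2)^(-a) * (1+(t/r)^2)^(-a) :=
    Real.mul_rpow (sq_nonneg r) hx.le
  have e3 : ((r:ℝ)^2)^(-a) = r^(-(2*a)) := by
    rw [← Real.rpow_natCast r 2, ← Real.rpow_mul hr.le]
    norm_num
  have e4 : r^(1-2*a) = r * r^(-(2*a)) := by
    rw [show (1-2*a) = 1 + (-(2*a)) by ring, Real.rpow_add hr, Real.rpow_one]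
  rw [Gq, e1, e2, e3, e4]
  simp only [Qp, Nat.cast_zero, sub_zero, eval_X]
  field_simp

lemma iteratedDeriv_kernel_pos (c a r : ℝ) (hr : 0 < r) (m : ℕ) :
    ∀ t, iteratedDeriv m (fun t => c * (t * (t^2 + r^2)^(-a))) t
      = c * r^(1-2*a-(m:ℝ)) * Gq a m (t/r) := by
  induction m with
  | zero =>
    intro t
    rw [iteratedDeriv_zero]
    simpa using base_alg c a r t hr
  | succ m ih =>
    intro t
    rw [iteratedDeriv_succ, funext ih]
    have h1 : HasDerivAt (fun t : ℝ => t / r) (1/r) t := (hasDerivAt_id t).div_const r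
    have h2 : HasDerivAt (fun t : ℝ => Gq a m (t/r)) (Gq a (m+1) (t/r) * (1/r)) t :=
      by have := (hasDerivAt_Gq a m (t/r)).comp t h1; exact this
    rw [(h2.const_mul (c * r^(1-2*a-(m:ℝ)))).deriv]
    have e1 : r^(1-2*a-((m:ℕ)+1:ℕ):ℝ) = r^(1-2*a-(m:ℝ)) * (1/r) := by
      push_cast
      rw [show 1-2*a-((m:ℝ)+1) = (1-2*a-(m:ℝ)) + (-1) by ring, Real.rpow_add hr,
        Real.rpow_neg_one]
      ring
    rw [e1]; ring

lemma iteratedDeriv_kernel_zero (c a : ℝ) (m : ℕ) :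
    ∀ t, 0 < t → iteratedDeriv m (fun t => c * (t * (t^2 + 0^2)^(-a))) t
      = c * (∏ k ∈ Finset.range m, (1-2*a-(k:ℝ))) * t^(1-2*a-(m:ℝ)) := by
  induction m with
  | zero =>
    intro t ht
    rw [iteratedDeriv_zero]
    have e3 : ((t:ℝ)^2)^(-a) = t^(-(2*a)) := by
      rw [← Real.rpow_natCast t 2, ← Real.rpow_mul ht.le]
      norm_num
    have e4 : t^(1-2*a) = t * t^(-(2*a)) := by
      rw [show (1-2*a) = 1 + (-(2*a)) by ring, Real.rpow_add ht, Real.rpow_one]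
    simp [e3, e4]
  | succ m ih =>
    intro t ht
    rw [iteratedDeriv_succ]
    have heq : iteratedDeriv m (fun t => c * (t * (t^2 + 0^2)^(-a)))
        =ᶠ[nhds t] fun t => c * (∏ k ∈ Finset.range m, (1-2*a-(k:ℝ))) * t^(1-2*a-(m:ℝ)) :=
      Filter.eventuallyEq_of_mem (Ioi_mem_nhds ht) (fun s hs => ih s hs)
    rw [heq.deriv_eq]
    have h1 : HasDerivAt (fun t : ℝ => t^(1-2*a-(m:ℝ)))
        ((1-2*a-(m:ℝ)) * t^(1-2*a-(m:ℝ)-1)) t :=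
      Real.hasDerivAt_rpow_const (Or.inl ht.ne')
    rw [(h1.const_mul (c * (∏ k ∈ Finset.range m, (1-2*a-(k:ℝ))))).deriv,
      Finset.prod_range_succ]
    push_cast
    rw [show 1-2*a-((m:ℝ)+1) = 1-2*a-(m:ℝ)-1 by ring]
    ring

lemma kernel_deriv_bound (n m : ℕ) :
    ∃ C : ℝ, 0 < C ∧ ∀ (x : EuclideanSpace ℝ (Fin n)) (t : ℝ), 0 < t →
      |iteratedDeriv m (fun s => poissonKernelHS n s x) t| ≤ C * (t + ‖x‖) ^ (-(n:ℝ) - (m:ℝ)) := by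
  set a : ℝ := ((n:ℝ)+1)/2 with ha_def
  set c : ℝ := Real.Gamma a / Real.pi ^ a with hc_def
  set K : ℝ := ∑ i ∈ Finset.range (m+2), |(Qp a m).coeff i| with hK_def
  set D : ℝ := |∏ k ∈ Finset.range m, (1-2*a-(k:ℝ))| with hD_def
  have hK0 : 0 ≤ K := Finset.sum_nonneg fun i _ => abs_nonneg _
  have hD0 : 0 ≤ D := abs_nonneg _
  have h2 : (0:ℝ) < 2^(a+(m:ℝ)) := Real.rpow_pos_of_pos two_pos _
  refine ⟨(|c|+1) * (2^(a+(m:ℝ)) * (K+1) + D + 1), by positivity, ?_⟩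
  intro x t ht
  have hq : 1-2*a-(m:ℝ) = -(n:ℝ)-(m:ℝ) := by rw [ha_def]; ring
  have hfun : (fun s => poissonKernelHS n s x) = fun s => c * (s * (s^2 + ‖x‖^2)^(-a)) := rfl
  rcases eq_or_lt_of_le (norm_nonneg x) with hx | hr
  · -- ‖x‖ = 0
    rw [hfun, ← hx, add_zero, iteratedDeriv_kernel_zero c a m t ht, hq]
    have htq : (0:ℝ) < t^(-(n:ℝ)-(m:ℝ)) := Real.rpow_pos_of_pos ht _
    rw [abs_mul, abs_mul, abs_of_nonneg htq.le, ← hD_def]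
    refine mul_le_mul_of_nonneg_right ?_ htq.le
    nlinarith [abs_nonneg c, hK0, hD0, h2.le, mul_nonneg (abs_nonneg c) hD0,
      mul_nonneg (mul_nonneg (abs_nonneg c) h2.le) hK0, mul_nonneg (abs_nonneg c) h2.le,
      mul_nonneg h2.le hK0]
  · -- 0 < ‖x‖
    set r : ℝ := ‖x‖ with hr_def
    set s : ℝ := t / r with hs_def
    have hs : 0 < s := div_pos ht hr
    have h1s : (0:ℝ) < 1 + s := by positivity
    set e : ℝ := -a-(m:ℝ) with he_def
    have ha0 : (0:ℝ) < a := by rw [ha_def]; positivity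
    have he0 : e ≤ 0 := by
      rw [he_def]
      have := Nat.cast_nonneg (α := ℝ) m
      linarith
    rw [hfun, iteratedDeriv_kernel_pos c a r hr m t, hq]
    have hrq : (0:ℝ) < r^(-(n:ℝ)-(m:ℝ)) := Real.rpow_pos_of_pos hr _
    have hA : (1+s^2)^e ≤ 2^(a+(m:ℝ)) * (1+s)^(2*e) := by
      have h0 : (0:ℝ) < (1+s)^2/2 := by positivity
      have hle : (1+s)^2/2 ≤ 1+s^2 := by nlinarith [sq_nonneg (1-s)]
      calc (1+s^2)^e ≤ ((1+s)^2/2)^e := Real.rpow_le_rpow_of_nonpos h0 hle he0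
        _ = 2^(a+(m:ℝ)) * (1+s)^(2*e) := by
            rw [Real.div_rpow (by positivity) (by norm_num : (0:ℝ) ≤ 2)]
            rw [← Real.rpow_natCast (1+s) 2, ← Real.rpow_mul h1s.le]
            rw [div_eq_mul_inv, ← Real.rpow_neg (by norm_num : (0:ℝ) ≤ 2)]
            rw [show -e = a + (m:ℝ) by rw [he_def]; ring]
            push_cast
            ring
    have hB : |(Qp a m).eval s| ≤ K * (1+s)^(((m+1:ℕ)):ℝ) := by
      have := poly_eval_bound (Qp a m) (m+1) (Qp_natDegree_le a m) s hs.le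
      rwa [← Real.rpow_natCast (1+s) (m+1), ← hK_def] at this
    have hGq : |Gq a m s| = (1+s^2)^e * |(Qp a m).eval s| := by
      rw [Gq, ← he_def, abs_mul, abs_of_nonneg (Real.rpow_nonneg (by positivity) _)]
    have h5 : (1+s)^(2*e) * (1+s)^(((m+1:ℕ)):ℝ) = (1+s)^(-(n:ℝ)-(m:ℝ)) := by
      rw [← Real.rpow_add h1s]
      congr 1
      rw [he_def, ha_def]
      push_cast
      ring
    have h6 : r^(-(n:ℝ)-(m:ℝ)) * (1+s)^(-(n:ℝ)-(m:ℝ)) = (t+r)^(-(n:ℝ)-(m:ℝ)) := by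
      rw [← Real.mul_rpow hr.le h1s.le]
      congr 1
      rw [hs_def]
      field_simp
      ring
    calc |c * r^(-(n:ℝ)-(m:ℝ)) * Gq a m s|
        = |c| * (r^(-(n:ℝ)-(m:ℝ)) * ((1+s^2)^e * |(Qp a m).eval s|)) := by
          rw [abs_mul, abs_mul, hGq, abs_of_nonneg hrq.le]; ring
      _ ≤ |c| * (r^(-(n:ℝ)-(m:ℝ)) * ((2^(a+(m:ℝ)) * (1+s)^(2*e)) * (K * (1+s)^(((m+1:ℕ)):ℝ)))) := by
          refine mul_le_mul_of_nonneg_left (mul_le_mul_of_nonneg_left ?_ hrq.le) (abs_nonneg c)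
          exact mul_le_mul hA hB (abs_nonneg _) (by positivity)
      _ = (|c| * (2^(a+(m:ℝ)) * K)) * (r^(-(n:ℝ)-(m:ℝ)) * ((1+s)^(2*e) * (1+s)^(((m+1:ℕ)):ℝ))) := by
          ring
      _ = (|c| * (2^(a+(m:ℝ)) * K)) * (t+r)^(-(n:ℝ)-(m:ℝ)) := by rw [h5, h6]
      _ ≤ (|c|+1) * (2^(a+(m:ℝ)) * (K+1) + D + 1) * (t+r)^(-(n:ℝ)-(m:ℝ)) := by
          refine mul_le_mul_of_nonneg_right ?_ (Real.rpow_nonneg (by positivity) _)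
          nlinarith [abs_nonneg c, hK0, hD0, h2.le, mul_nonneg (abs_nonneg c) hD0,
            mul_nonneg (mul_nonneg (abs_nonneg c) h2.le) hK0, mul_nonneg (abs_nonneg c) h2.le,
            mul_nonneg h2.le hK0]

lemma integral_bound (P b A : ℝ) (hP : 0 ≤ P) (hb : -1 < b) (hbP : b - P < -1) (hA : 0 < A) :
    IntegrableOn (fun s => (A+s)^(-P) * s^b) (Ioi (0:ℝ)) ∧
    ∫ s in Ioi (0:ℝ), (A+s)^(-P) * s^b ≤ (1/(b+1) + 1/(P-b-1)) * A^(b+1-P) := by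
  set h : ℝ → ℝ := fun s => (A+s)^(-P) * s^b with hh
  have hcont : ContinuousOn h (Ioi 0) := by
    refine ContinuousOn.mul ?_ ?_
    · exact (continuousOn_const.add continuousOn_id).rpow_const
        (fun s hs => Or.inl (by have : (0:ℝ) < s := hs; show A + s ≠ 0; positivity))
    · exact continuousOn_id.rpow_const (fun s hs => Or.inl (ne_of_gt hs))
  have hnonneg : ∀ s ∈ Ioi (0:ℝ), 0 ≤ h s := by
    intro s hs
    have : (0:ℝ) < s := hs
    exact mul_nonneg (Real.rpow_nonneg (by positivity) _) (Real.rpow_nonneg this.le _)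
  -- piece 1 : Ioc 0 A
  have hg1 : IntegrableOn (fun s : ℝ => A^(-P) * s^b) (Ioc 0 A) := by
    have := intervalIntegral.intervalIntegrable_rpow' (a := 0) (b := A) hb
    rw [intervalIntegrable_iff_integrableOn_Ioc_of_le hA.le] at this
    exact this.const_mul _
  have hbd1 : ∀ s ∈ Ioc (0:ℝ) A, h s ≤ A^(-P) * s^b := by
    intro s hs
    refine mul_le_mul_of_nonneg_right ?_ (Real.rpow_nonneg hs.1.le _)
    exact Real.rpow_le_rpow_of_nonpos hA (by linarith [hs.1]) (neg_nonpos.mpr hP)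
  have hint1 : IntegrableOn h (Ioc 0 A) := by
    refine hg1.mono' ?_ ?_
    · exact ((hcont.mono Ioc_subset_Ioi_self).aestronglyMeasurable measurableSet_Ioc)
    · rw [ae_restrict_iff' measurableSet_Ioc]
      filter_upwards with s hs
      rw [Real.norm_eq_abs, abs_of_nonneg (hnonneg s hs.1)]
      exact hbd1 s hs
  -- piece 2 : Ioi A
  have hg2 : IntegrableOn (fun s : ℝ => s^(b-P)) (Ioi A) := integrableOn_Ioi_rpow_of_lt hbP hA
  have hbd2 : ∀ s ∈ Ioi A, h s ≤ s^(b-P) := by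
    intro s hs
    have hs0 : (0:ℝ) < s := hA.trans hs
    have : h s ≤ s^(-P) * s^b := by
      refine mul_le_mul_of_nonneg_right ?_ (Real.rpow_nonneg hs0.le _)
      exact Real.rpow_le_rpow_of_nonpos hs0 (by linarith) (neg_nonpos.mpr hP)
    rwa [← Real.rpow_add hs0, show -P + b = b - P by ring] at this
  have hint2 : IntegrableOn h (Ioi A) := by
    refine hg2.mono' ?_ ?_
    · exact ((hcont.mono (fun s hs => lt_trans hA hs)).aestronglyMeasurable measurableSet_Ioi)
    · rw [ae_restrict_iff' measurableSet_Ioi]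
      filter_upwards with s hs
      rw [Real.norm_eq_abs, abs_of_nonneg (hnonneg s (hA.trans hs))]
      exact hbd2 s hs
  have hsplit : Ioi (0:ℝ) = Ioc 0 A ∪ Ioi A := (Ioc_union_Ioi_eq_Ioi hA.le).symm
  constructor
  · rw [hsplit]; exact hint1.union hint2
  · rw [hsplit, setIntegral_union Ioc_disjoint_Ioi_same measurableSet_Ioi hint1 hint2]
    have I1 : ∫ s in Ioc (0:ℝ) A, h s ≤ A^(-P) * (A^(b+1)/(b+1)) := by
      have step : ∫ s in Ioc (0:ℝ) A, h s ≤ ∫ s in Ioc (0:ℝ) A, A^(-P) * s^b :=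
        setIntegral_mono_on hint1 hg1 measurableSet_Ioc hbd1
      have hval : ∫ s in Ioc (0:ℝ) A, A^(-P) * s^b = A^(-P) * (A^(b+1)/(b+1)) := by
        rw [integral_const_mul]
        congr 1
        rw [← intervalIntegral.integral_of_le hA.le, integral_rpow (Or.inl hb),
          Real.zero_rpow (by linarith : b+1 ≠ 0)]
        ring
      linarith [step, hval.le, hval.ge]
    have I2 : ∫ s in Ioi A, h s ≤ A^(b-P+1)/(P-b-1) := by
      have step : ∫ s in Ioi A, h s ≤ ∫ s in Ioi A, s^(b-P) :=
        setIntegral_mono_on hint2 hg2 measurableSet_Ioi hbd2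
      rw [integral_Ioi_rpow_of_lt hbP hA] at step
      have : -A^(b-P+1)/(b-P+1) = A^(b-P+1)/(P-b-1) := by
        rw [div_eq_div_iff (by linarith) (by linarith)]
        ring
      linarith [step]
    have e1 : A^(-P) * (A^(b+1)/(b+1)) = (1/(b+1)) * A^(b+1-P) := by
      rw [Real.rpow_sub hA, Real.rpow_neg hA.le]
      ring
    have e2 : A^(b-P+1)/(P-b-1) = (1/(P-b-1)) * A^(b+1-P) := by
      rw [show b-P+1 = b+1-P by ring]
      ring
    rw [e1] at I1
    rw [e2] at I2
    have := add_le_add I1 I2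
    linarith [this]

/-- For every `γ > 0` there is `C = C(n,γ) > 0` such that for all `u > 0`
and all `x ∈ ℝⁿ`, `|∂_u^γ p_u(x)| ≤ C (u + |x|)^{−n−γ}`. -/
theorem stmt_15 (n : ℕ) (hn : 1 ≤ n) (γ : ℝ) (hγ : 0 < γ) :
    ∃ C : ℝ, 0 < C ∧ ∀ u : ℝ, 0 < u → ∀ x : EuclideanSpace ℝ (Fin n),
      ‖fracKernel n γ u x‖ ≤ C * (u + ‖x‖) ^ (-(n : ℝ) - γ) := by
  set m : ℕ := mOf γ with hm_def
  have hmγ : γ < (m:ℝ) := by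
    rw [hm_def, mOf]
    push_cast
    exact Nat.lt_floor_add_one γ
  have hΓ : 0 < Real.Gamma ((m:ℝ) - γ) := Real.Gamma_pos_of_pos (by linarith)
  obtain ⟨C₀, hC₀, hker⟩ := kernel_deriv_bound n m
  set P : ℝ := (n:ℝ) + (m:ℝ) with hP_def
  set b : ℝ := (m:ℝ) - γ - 1 with hb_def
  have hP : 0 ≤ P := by positivity
  have hb : -1 < b := by rw [hb_def]; linarith
  have hbP : b - P < -1 := by
    rw [hb_def, hP_def]
    have : (0:ℝ) ≤ n := Nat.cast_nonneg n
    linarith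
  have hcoef : (0:ℝ) < 1/(b+1) + 1/(P-b-1) := by
    have h1 : (0:ℝ) < b + 1 := by linarith
    have h2 : (0:ℝ) < P - b - 1 := by linarith
    positivity
  refine ⟨C₀ * (1/(b+1) + 1/(P-b-1)) / Real.Gamma ((m:ℝ) - γ), by positivity, ?_⟩
  intro u hu x
  set A : ℝ := u + ‖x‖ with hA_def
  have hA : 0 < A := by have := norm_nonneg x; rw [hA_def]; linarith
  obtain ⟨hint, hval⟩ := integral_bound P b A hP hb hbP hA
  -- step 1: abs of fracKernel
  have step1 : ‖fracKernel n γ u x‖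
      = (1 / Real.Gamma ((m:ℝ) - γ)) *
        |∫ s in Ioi (0:ℝ), iteratedDeriv m (fun r => poissonKernelHS n r x) (u + s)
            * s ^ ((m:ℝ) - γ - 1)| := by
    rw [fracKernel, norm_mul, norm_div, Complex.norm_exp_ofReal_mul_I, Complex.norm_real,
      Complex.norm_real, Real.norm_eq_abs, Real.norm_eq_abs, abs_of_pos hΓ, ← hm_def]
    try ring
  rw [step1]
  -- step 2 + 3
  have step2 : |∫ s in Ioi (0:ℝ), iteratedDeriv m (fun r => poissonKernelHS n r x) (u + s)
        * s ^ ((m:ℝ) - γ - 1)|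
      ≤ ∫ s in Ioi (0:ℝ), C₀ * ((A+s)^(-P) * s^b) := by
    rw [← Real.norm_eq_abs]
    refine le_trans (norm_integral_le_integral_norm _) ?_
    refine integral_mono_of_nonneg (Eventually.of_forall fun s => norm_nonneg _)
      (hint.const_mul C₀) ?_
    filter_upwards [ae_restrict_mem measurableSet_Ioi] with s hs
    have hs0 : (0:ℝ) < s := hs
    rw [Real.norm_eq_abs, abs_mul, abs_of_nonneg (Real.rpow_nonneg hs0.le _)]
    have hb' : ((m:ℝ) - γ - 1) = b := hb_def.symm
    rw [hb']
    have hbound := hker x (u + s) (by linarith)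
    have e1 : (u + s + ‖x‖) = A + s := by rw [hA_def]; ring
    have e2 : (-(n:ℝ) - (m:ℝ)) = -P := by rw [hP_def]; ring
    rw [e1, e2] at hbound
    calc |iteratedDeriv m (fun r => poissonKernelHS n r x) (u + s)| * s ^ b
        ≤ (C₀ * (A+s)^(-P)) * s^b := by
          refine mul_le_mul_of_nonneg_right hbound (Real.rpow_nonneg hs0.le _)
      _ = C₀ * ((A+s)^(-P) * s^b) := by ring
  refine le_trans (mul_le_mul_of_nonneg_left step2 (by positivity)) ?_
  rw [integral_const_mul]
  have step3 : C₀ * ∫ s in Ioi (0:ℝ), (A+s)^(-P) * s^b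
      ≤ C₀ * ((1/(b+1) + 1/(P-b-1)) * A^(b+1-P)) :=
    mul_le_mul_of_nonneg_left hval hC₀.le
  have efin : b + 1 - P = -(n:ℝ) - γ := by rw [hb_def, hP_def]; ring
  rw [efin] at step3
  calc (1 / Real.Gamma ((m:ℝ) - γ)) * (C₀ * ∫ s in Ioi (0:ℝ), (A+s)^(-P) * s^b)
      ≤ (1 / Real.Gamma ((m:ℝ) - γ)) * (C₀ * ((1/(b+1) + 1/(P-b-1)) * A^(-(n:ℝ) - γ))) :=
        mul_le_mul_of_nonneg_left step3 (by positivity)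
    _ = C₀ * (1/(b+1) + 1/(P-b-1)) / Real.Gamma ((m:ℝ) - γ) * A^(-(n:ℝ) - γ) := by ring
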